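/- The characteristic function ψ = χ_{[−1/2, 1/2]} of the interval [−1/2, 1/2] belongs to L¹(ℝ) ∩ L²(ℝ), but its Wigner transform Wψ does not belong to L¹(ℝ²). -/

import Mathlib

open MeasureTheory Real Complex

section SincAux
open intervalIntegral Filter Finset

lemma abs_sin_periodic : Function.Periodic (fun t : ℝ => |Real.sin t|) Real.pi := by
  intro x; simp [Real.sin_add_pi]

lemma integral_abs_sin_interval (k : ℕ) :
    ∫ t in (k * π)..((k : ℝ) + 1) * π, |Real.sin t| = 2 := by
  have h : ((k : ℝ) + 1) * π = k * π + π := by ring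
  rw [h, abs_sin_periodic.intervalIntegral_add_eq (k * π) 0, zero_add]
  rw [intervalIntegral.integral_congr (g := Real.sin) ?_]
  · rw [integral_sin]; norm_num
  · intro t ht
    rw [Set.uIcc_of_le Real.pi_pos.le] at ht
    exact abs_of_nonneg (Real.sin_nonneg_of_nonneg_of_le_pi ht.1 ht.2)

lemma not_integrableOn_sinc :
    ¬ IntegrableOn (fun t : ℝ => |Real.sin t| / t) (Set.Ioi 0) volume := by
  intro H
  set M := ∫ t in Set.Ioi (0:ℝ), |Real.sin t| / t with hM
  have hIoc : ∀ k : ℕ, Set.Ioc ((k:ℝ) * π) (((k:ℝ)+1) * π) ⊆ Set.Ioi 0 := by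
    intro k t ht
    have : (0:ℝ) ≤ k * π := by positivity
    exact lt_of_le_of_lt this ht.1
  have hii : ∀ k : ℕ, IntervalIntegrable (fun t : ℝ => |Real.sin t| / t) volume
      ((k:ℝ) * π) (((k:ℝ)+1) * π) := by
    intro k
    rw [intervalIntegrable_iff_integrableOn_Ioc_of_le (by nlinarith [Real.pi_pos] : (k:ℝ)*π ≤ ((k:ℝ)+1)*π)]
    exact H.mono_set (hIoc k)
  have key : ∀ n : ℕ, (∑ k ∈ Finset.range n, 2 / (((k:ℝ) + 1) * π)) ≤ M := by
    intro n
    have step : ∀ k : ℕ, 2 / (((k:ℝ) + 1) * π) ≤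
        ∫ t in ((k:ℝ) * π)..(((k:ℝ)+1) * π), |Real.sin t| / t := by
      intro k
      have hle : (k:ℝ) * π ≤ ((k:ℝ)+1) * π := by nlinarith [Real.pi_pos]
      have hconst : IntervalIntegrable (fun t : ℝ => |Real.sin t| / (((k:ℝ)+1) * π)) volume
          ((k:ℝ) * π) (((k:ℝ)+1) * π) :=
        ((continuous_abs.comp Real.continuous_sin).div_const _).intervalIntegrable _ _
      have hmono := intervalIntegral.integral_mono_on hle hconst (hii k) ?_
      · calc 2 / (((k:ℝ) + 1) * π)
            = (∫ t in ((k:ℝ) * π)..(((k:ℝ)+1) * π), |Real.sin t|) / (((k:ℝ)+1) * π) := by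
              rw [integral_abs_sin_interval]
          _ = ∫ t in ((k:ℝ) * π)..(((k:ℝ)+1) * π), |Real.sin t| / (((k:ℝ)+1) * π) := by
              rw [intervalIntegral.integral_div]
          _ ≤ _ := hmono
      · intro t ht
        rcases eq_or_lt_of_le ht.1 with h | h
        · rcases (mul_nonneg (Nat.cast_nonneg k) Real.pi_pos.le).eq_or_lt with h0 | h0
          · have h00 : t = 0 := by rw [← h, ← h0]
            simp [h00]
          · exact div_le_div_of_nonneg_left (abs_nonneg _) (h ▸ h0) ht.2
        · exact div_le_div_of_nonneg_left (abs_nonneg _)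
            (lt_of_le_of_lt (by positivity) h) ht.2
    calc (∑ k ∈ Finset.range n, 2 / (((k:ℝ) + 1) * π))
        ≤ ∑ k ∈ Finset.range n, ∫ t in ((k:ℝ) * π)..(((k:ℝ)+1) * π), |Real.sin t| / t :=
          Finset.sum_le_sum fun k _ => step k
      _ = ∫ t in ((0:ℕ):ℝ) * π..((n:ℕ):ℝ) * π, |Real.sin t| / t := by
          have hs := intervalIntegral.sum_integral_adjacent_intervals
            (a := fun k : ℕ => (k:ℝ) * π) (μ := volume)
            (f := fun t => |Real.sin t| / t) (n := n) (fun k _ => by push_cast; exact hii k)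
          push_cast at hs ⊢
          rw [← hs]
      _ = ∫ t in Set.Ioc (0:ℝ) ((n:ℝ) * π), |Real.sin t| / t := by
          rw [Nat.cast_zero, zero_mul, intervalIntegral.integral_of_le (by positivity)]
      _ ≤ M := by
          apply setIntegral_mono_set H
          · filter_upwards [ae_restrict_mem measurableSet_Ioi] with t ht
            exact div_nonneg (abs_nonneg _) (le_of_lt ht)
          · exact Filter.Eventually.of_forall fun t ht => ht.1
  have hdiv : Tendsto (fun n => ∑ k ∈ Finset.range n, 2 / (((k:ℝ) + 1) * π)) atTop atTop := by
    have he : (fun n => ∑ k ∈ Finset.range n, 2 / (((k:ℝ) + 1) * π)) =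
        fun n => (2 / π) * ∑ k ∈ Finset.range n, 1 / ((k:ℝ) + 1) := by
      funext n
      rw [Finset.mul_sum]
      exact Finset.sum_congr rfl fun k _ => by field_simp
    rw [he]
    exact Real.tendsto_sum_range_one_div_nat_succ_atTop.const_mul_atTop (by positivity)
  obtain ⟨n, hn⟩ := (hdiv.eventually_gt_atTop M).exists
  exact absurd (key n) (not_le.2 hn)

end SincAux

/-- The one-dimensional Wigner transform of `ψ : ℝ → ℂ`. -/
noncomputable def wigner1 (ℏ : ℝ) (ψ : ℝ → ℂ) (z : ℝ × ℝ) : ℂ :=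
  (1 / (2 * Real.pi * ℏ)) *
    ∫ y : ℝ, Complex.exp (-(Complex.I / (ℏ : ℂ)) * ((z.2 * y : ℝ) : ℂ)) *
      ψ (z.1 + y / 2) * (starRingEnd ℂ) (ψ (z.1 - y / 2))

/-- the indicator of `[-1/2, 1/2]` is in `L¹ ∩ L²` but its Wigner transform is
not integrable on `ℝ²`. -/
theorem wigner_indicator_not_integrable (ℏ : ℝ) (hℏ : 0 < ℏ) :
    Integrable ((Set.Icc (-(1:ℝ)/2) (1/2)).indicator (fun _ => (1 : ℂ)))
      (volume : Measure ℝ) ∧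
    MemLp ((Set.Icc (-(1:ℝ)/2) (1/2)).indicator (fun _ => (1 : ℂ))) 2 (volume : Measure ℝ) ∧
    ¬ Integrable (wigner1 ℏ ((Set.Icc (-(1:ℝ)/2) (1/2)).indicator (fun _ => (1 : ℂ))))
      (volume : Measure (ℝ × ℝ)) := by
  set ψ : ℝ → ℂ := (Set.Icc (-(1:ℝ)/2) (1/2)).indicator (fun _ => (1 : ℂ)) with hψ
  refine ⟨?_, ?_, ?_⟩
  · rw [hψ, integrable_indicator_iff measurableSet_Icc]
    exact integrableOn_const measure_Icc_lt_top.ne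
  · exact memLp_indicator_const 2 measurableSet_Icc 1 (Or.inr measure_Icc_lt_top.ne)
  intro hW
  rw [MeasureTheory.Measure.volume_eq_prod] at hW
  have hae := hW.prod_right_ae
  -- key claim: no slice over x ∈ (-1/2, 1/2) is integrable
  have hslice : ∀ x ∈ Set.Ioo (-(1:ℝ)/2) (1/2),
      ¬ Integrable (fun p : ℝ => wigner1 ℏ ψ (x, p)) volume := by
    intro x hx hint
    set a : ℝ := 1 - 2 * |x| with ha_def
    have hxlt : |x| < 1/2 := abs_lt.2 ⟨by linarith [hx.1], by linarith [hx.2]⟩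
    have ha : 0 < a := by rw [ha_def]; linarith
    have hmem : ∀ y : ℝ,
        ((x + y/2 ∈ Set.Icc (-(1:ℝ)/2) (1/2)) ∧ (x - y/2 ∈ Set.Icc (-(1:ℝ)/2) (1/2))) ↔
          y ∈ Set.Icc (-a) a := by
      intro y
      simp only [Set.mem_Icc, ha_def]
      rcases abs_cases x with ⟨h, h'⟩ | ⟨h, h'⟩ <;> rw [h] <;>
        exact ⟨fun ⟨⟨u1, u2⟩, v1, v2⟩ => ⟨by linarith, by linarith⟩,
          fun ⟨w1, w2⟩ => ⟨⟨by linarith, by linarith⟩, by linarith, by linarith⟩⟩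
    have hprod : ∀ y : ℝ,
        ψ (x + y/2) * (starRingEnd ℂ) (ψ (x - y/2)) =
          (Set.Icc (-a) a).indicator (fun _ => (1 : ℂ)) y := by
      intro y
      by_cases hy : y ∈ Set.Icc (-a) a
      · obtain ⟨h1, h2⟩ := (hmem y).2 hy
        have e1 : ψ (x + y/2) = 1 := Set.indicator_of_mem h1 _
        have e2 : ψ (x - y/2) = 1 := Set.indicator_of_mem h2 _
        rw [e1, e2, map_one, one_mul, Set.indicator_of_mem hy]
      · have hcc : ¬ ((x + y/2 ∈ Set.Icc (-(1:ℝ)/2) (1/2)) ∧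
            (x - y/2 ∈ Set.Icc (-(1:ℝ)/2) (1/2))) := fun hcc => hy ((hmem y).1 hcc)
        rw [Set.indicator_of_notMem hy]
        rcases not_and_or.1 hcc with h | h
        · have e1 : ψ (x + y/2) = 0 := Set.indicator_of_notMem h _
          rw [e1, zero_mul]
        · have e2 : ψ (x - y/2) = 0 := Set.indicator_of_notMem h _
          rw [e2, map_zero, mul_zero]
    have hval : ∀ p : ℝ, p ≠ 0 →
        wigner1 ℏ ψ (x, p) = ((Real.sin (p * a / ℏ) / (π * p) : ℝ) : ℂ) := by
      intro p hp
      have hℏ0 : (ℏ : ℂ) ≠ 0 := Complex.ofReal_ne_zero.2 hℏ.ne'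
      have hp0 : (p : ℂ) ≠ 0 := Complex.ofReal_ne_zero.2 hp
      set c : ℂ := -(Complex.I * p / ℏ) with hc_def
      have hc : c ≠ 0 := by
        rw [hc_def]
        simp [div_eq_zero_iff, Complex.I_ne_zero, hp0, hℏ0]
      have hintegrand : ∀ y : ℝ,
          Complex.exp (-(Complex.I / (ℏ : ℂ)) * ((p * y : ℝ) : ℂ)) * ψ (x + y/2) *
            (starRingEnd ℂ) (ψ (x - y/2)) =
          (Set.Icc (-a) a).indicator (fun y : ℝ => Complex.exp (c * (y : ℂ))) y := by
        intro y
        rw [mul_assoc, hprod y]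
        by_cases hy : y ∈ Set.Icc (-a) a
        · rw [Set.indicator_of_mem hy, Set.indicator_of_mem hy, mul_one]
          congr 1
          rw [hc_def]
          push_cast
          ring
        · rw [Set.indicator_of_notMem hy, Set.indicator_of_notMem hy, mul_zero]
      have hfun : (fun y : ℝ => Complex.exp (-(Complex.I / (ℏ:ℂ)) * ((p * y : ℝ):ℂ)) *
          ψ (x + y/2) * (starRingEnd ℂ) (ψ (x - y/2))) =
          fun y => (Set.Icc (-a) a).indicator (fun y : ℝ => Complex.exp (c * (y:ℂ))) y :=
        funext hintegrand
      show (1 / (2 * (π:ℂ) * ℏ)) * ∫ y : ℝ,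
          Complex.exp (-(Complex.I / (ℏ:ℂ)) * ((p * y : ℝ):ℂ)) * ψ (x + y/2) *
            (starRingEnd ℂ) (ψ (x - y/2)) = _
      rw [hfun, MeasureTheory.integral_indicator measurableSet_Icc,
        MeasureTheory.integral_Icc_eq_integral_Ioc,
        ← intervalIntegral.integral_of_le (by linarith : -a ≤ a),
        integral_exp_mul_complex hc]
      have e1 : c * ((a : ℝ) : ℂ) = ((-(p * a / ℏ) : ℝ) : ℂ) * Complex.I := by
        rw [hc_def]; push_cast; ring
      have e2 : c * ((-a : ℝ) : ℂ) = (((p * a / ℏ) : ℝ) : ℂ) * Complex.I := by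
        rw [hc_def]; push_cast; ring
      rw [e1, e2, Complex.exp_mul_I, Complex.exp_mul_I, ← Complex.ofReal_cos,
        ← Complex.ofReal_sin, ← Complex.ofReal_cos, ← Complex.ofReal_sin,
        Real.cos_neg, Real.sin_neg, hc_def]
      have hπ : (π : ℂ) ≠ 0 := Complex.ofReal_ne_zero.2 Real.pi_ne_zero
      push_cast
      field_simp
      ring_nf
    -- Step C: derive contradiction from integrability of the slice
    have hne : ∀ᵐ p : ℝ, p ≠ 0 := by
      rw [ae_iff]
      simp only [not_not, Set.setOf_eq_eq_singleton]
      exact Real.volume_singleton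
    have h1 : Integrable (fun p : ℝ => ((Real.sin (p * a / ℏ) / (π * p) : ℝ) : ℂ)) volume :=
      hint.congr (hne.mono fun p hp => hval p hp)
    have h2 : Integrable (fun p : ℝ => |Real.sin (p * a / ℏ) / (π * p)|) volume := by
      have := h1.norm
      simp only [Complex.norm_real, Real.norm_eq_abs] at this
      exact this
    have hca : ℏ / a ≠ 0 := div_ne_zero hℏ.ne' ha.ne'
    have h3 := h2.comp_mul_left' hca
    have h4 : Integrable (fun t : ℝ => |Real.sin t| / |t|) volume := by
      refine (h3.const_mul (π * ℏ / a)).congr (Filter.Eventually.of_forall fun t => ?_)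
      rcases eq_or_ne t 0 with rfl | ht
      · simp
      · have harg : ℏ / a * t * a / ℏ = t := by field_simp
        simp only [harg, abs_div, abs_mul, abs_of_pos Real.pi_pos,
          abs_of_pos (div_pos hℏ ha)]
        field_simp [abs_ne_zero.2 ht, Real.pi_ne_zero]
    have h5 : IntegrableOn (fun t : ℝ => |Real.sin t| / t) (Set.Ioi 0) volume :=
      (h4.integrableOn).congr_fun (fun t ht => by beta_reduce; rw [abs_of_pos (show (0:ℝ) < t from ht)]) measurableSet_Ioi
    exact not_integrableOn_sinc h5
  have : ∀ᵐ x : ℝ, x ∉ Set.Ioo (-(1:ℝ)/2) (1/2) :=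
    hae.mono fun x hx hmem => hslice x hmem hx
  rw [ae_iff] at this
  simp only [not_not] at this
  rw [show {x : ℝ | x ∈ Set.Ioo (-(1:ℝ)/2) (1/2)} = Set.Ioo (-(1:ℝ)/2) (1/2) from rfl,
    Real.volume_Ioo] at this
  norm_num at this
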